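/- Discrete entropy inequality for the two-dimensional semi-discrete DG scheme (Theorem 3.1). Along any differentiable solution t ↦ (ρ_{ij}(t)) of the 2D semi-discrete scheme, the discrete entropy satisfies dẼ/dt = − Σ_{ij} (h^x_i h^y_j/4) Σ_{r,s} w_r w_s · f((ρ_{ij})_{rs}) · ( ((u^x_{ij})_{rs})² + ((u^y_{ij})_{rs})² ) − Σ_{ij} (h^y_j/2) Σ_s w_s (α^x_{i+½,j,s}/2) ( g((ρ_{(i+1)j})_{1s}) − g((ρ_{ij})_{(k+1)s}) ) ( H′((ρ_{(i+1)j})_{1s}) − H′((ρ_{ij})_{(k+1)s}) ) − Σ_{ij} (h^x_i/2) Σ_r w_r (α^y_{i,j+½,r}/2) ( g((ρ_{i(j+1)})_{r1}) − g((ρ_{ij})_{r(k+1)}) ) ( H′((ρ_{i(j+1)})_{r1}) − H′((ρ_{ij})_{r(k+1)}) ). Since H′ is strictly increasing, g is nondecreasing, the α coefficients are nonnegative and f ≥ 0, this gives dẼ/dt ≤ −Ĩ, where Ĩ = Σ_{ij} (h^x_i h^y_j/4) Σ_{r,s} w_r w_s f((ρ_{ij})_{rs}) ( ((u^x_{ij})_{rs})²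 + ((u^y_{ij})_{rs})² ) ≥ 0. -/

import Mathlib

open Matrix BigOperators

lemma comm3 {α β γ : Type*} [Fintype α] [Fintype β] [Fintype γ] (f : α → β → γ → ℝ) :
    ∑ a, ∑ b, ∑ c, f a b c = ∑ c, ∑ a, ∑ b, f a b c := by
  calc ∑ a, ∑ b, ∑ c, f a b c = ∑ a, ∑ c, ∑ b, f a b c :=
        Finset.sum_congr rfl fun a _ => Finset.sum_comm
    _ = ∑ c, ∑ a, ∑ b, f a b c := Finset.sum_comm

lemma collapse4 {α β γ δ : Type*} [Fintype α] [Fintype β] [Fintype γ] [Fintype δ]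
    (h : α × β × γ × δ → ℝ) :
    ∑ p, h p = ∑ i, ∑ j, ∑ r, ∑ s, h (i, j, r, s) := by
  simp only [Fintype.sum_prod_type]

lemma comm22 {α β γ δ : Type*} [Fintype α] [Fintype β] [Fintype γ] [Fintype δ]
    (f : α → β → γ → δ → ℝ) :
    ∑ a, ∑ b, ∑ c, ∑ d, f a b c d = ∑ c, ∑ d, ∑ a, ∑ b, f a b c d := by
  rw [comm3 (fun a b c => ∑ d, f a b c d)]
  exact Finset.sum_congr rfl fun c _ => comm3 (fun a b d => f a b c d)

lemma sum_swap8 {α β γ δ : Type*} [Fintype α] [Fintype β] [Fintype γ] [Fintype δ]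
    (F : (α × β × γ × δ) → (α × β × γ × δ) → ℝ) :
    (∑ i, ∑ j, ∑ i', ∑ j', ∑ r, ∑ s, ∑ r', ∑ s', F (i,j,r,s) (i',j',r',s'))
    = ∑ i, ∑ j, ∑ i', ∑ j', ∑ r, ∑ s, ∑ r', ∑ s', F (i',j',r',s') (i,j,r,s) := by
  have key : ∀ (G : (α × β × γ × δ) → (α × β × γ × δ) → ℝ),
      (∑ i, ∑ j, ∑ i', ∑ j', ∑ r, ∑ s, ∑ r', ∑ s', G (i,j,r,s) (i',j',r',s'))
      = ∑ p, ∑ q, G p q := by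
    intro G
    have h1 : ∀ i j, (∑ i', ∑ j', ∑ r, ∑ s, ∑ r', ∑ s', G (i,j,r,s) (i',j',r',s'))
        = ∑ r, ∑ s, ∑ q, G (i,j,r,s) q := by
      intro i j
      rw [comm22 (fun i' j' r s => ∑ r', ∑ s', G (i,j,r,s) (i',j',r',s'))]
      exact Finset.sum_congr rfl fun r _ => Finset.sum_congr rfl fun s _ =>
        (collapse4 (fun q => G (i,j,r,s) q)).symm
    calc (∑ i, ∑ j, ∑ i', ∑ j', ∑ r, ∑ s, ∑ r', ∑ s', G (i,j,r,s) (i',j',r',s'))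
        = ∑ i, ∑ j, ∑ r, ∑ s, ∑ q, G (i,j,r,s) q :=
          Finset.sum_congr rfl fun i _ => Finset.sum_congr rfl fun j _ => h1 i j
      _ = ∑ p, ∑ q, G p q := (collapse4 (fun p => ∑ q, G p q)).symm
  rw [key F, key (fun p q => F q p)]
  exact Finset.sum_comm

lemma prod_nonneg_mono {g h : ℝ → ℝ} (hg : Monotone g) (hh : Monotone h) (a b : ℝ) :
    0 ≤ (g b - g a) * (h b - h a) := by
  rcases le_total a b with hab | hab
  · exact mul_nonneg (sub_nonneg.2 (hg hab)) (sub_nonneg.2 (hh hab))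
  · exact mul_nonneg_iff.mpr (Or.inr ⟨sub_nonpos.2 (hg hab), sub_nonpos.2 (hh hab)⟩)

lemma bsum {n : ℕ} (hn : (0 : Fin (n+1)) ≠ Fin.last n) (c : Fin (n+1) → ℝ) :
    ∑ r, (if r = 0 then (-1 : ℝ) else if r = Fin.last n then 1 else 0) * c r
      = -c 0 + c (Fin.last n) := by
  have hn0 : n ≠ 0 := by
    intro h; subst h; exact hn (by ext; simp [Fin.last])
  have : ∀ r : Fin (n+1), (if r = 0 then (-1 : ℝ) else if r = Fin.last n then 1 else 0) * c r
      = (if r = 0 then -c r else 0) + (if r = Fin.last n then c r else 0) := by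
    intro r
    by_cases h0 : r = 0
    · subst h0; simp [hn0, if_neg (Ne.symm hn)]
    · by_cases hl : r = Fin.last n <;> simp [h0, hl, hn0]
  rw [Finset.sum_congr rfl fun r _ => this r, Finset.sum_add_distrib,
    Finset.sum_ite_eq' Finset.univ (0 : Fin (n+1)) (fun r => -c r),
    Finset.sum_ite_eq' Finset.univ (Fin.last n) c]
  simp

lemma zshift {N : ℕ} [NeZero N] (Q : ZMod N → ℝ) :
    ∑ i, Q (i - 1) = ∑ i, Q i :=
  Fintype.sum_equiv (Equiv.subRight 1) _ _ (fun _ => rfl)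

lemma oneD {N : ℕ} [NeZero N] {n : ℕ} (hn : (0 : Fin (n+1)) ≠ Fin.last n)
    (w : Fin (n+1) → ℝ) (hw : ∀ r, w r ≠ 0)
    (M B D : Matrix (Fin (n+1)) (Fin (n+1)) ℝ)
    (hM : M = Matrix.diagonal w)
    (hB : B = Matrix.diagonal
      (fun r => if r = 0 then (-1 : ℝ) else if r = Fin.last n then 1 else 0))
    (hSBP : M * D + Dᵀ * M = B)
    (h : ZMod N → ℝ) (hh : ∀ i, h i ≠ 0)
    (ξ fρ u X : ZMod N → Fin (n+1) → ℝ)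
    (ξhat Fhat d : ZMod N → ℝ)
    (hξhat : ∀ i, ξhat i = (ξ i (Fin.last n) + ξ (i+1) 0) / 2)
    (hu : ∀ i, u i = (2 / h i) • (M⁻¹ *ᵥ (-((Dᵀ * M) *ᵥ ξ i)
        + B *ᵥ (fun r => if r = 0 then ξhat (i-1)
            else if r = Fin.last n then ξhat i else 0))))
    (hFhat : ∀ i, Fhat i = (fρ (i+1) 0 * u (i+1) 0 + fρ i (Fin.last n) * u i (Fin.last n)) / 2
        + d i)
    (hX : ∀ i, X i = (2 / h i) • (M⁻¹ *ᵥ (-((Dᵀ * M) *ᵥ (fun r => fρ i r * u i r))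
        + B *ᵥ (fun r => if r = 0 then Fhat (i-1)
            else if r = Fin.last n then Fhat i else 0)))) :
    ∑ i, (h i / 2) * ∑ r, w r * ξ i r * X i r
      = -∑ i, (h i / 2) * ∑ r, w r * fρ i r * (u i r)^2
        - ∑ i, d i * (ξ (i+1) 0 - ξ i (Fin.last n)) := by
  have hn0 : n ≠ 0 := by
    intro h; subst h; exact hn (by ext; simp [Fin.last])
  have hMv : ∀ v : Fin (n+1) → ℝ, M *ᵥ (M⁻¹ *ᵥ v) = v := by
    intro v
    rw [Matrix.mulVec_mulVec, Matrix.mul_nonsing_inv, Matrix.one_mulVec]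
    rw [hM, Matrix.det_diagonal]
    exact IsUnit.mk0 _ (Finset.prod_ne_zero_iff.mpr (fun r _ => hw r))
  have hMd : ∀ v : Fin (n+1) → ℝ, M *ᵥ v = fun r => w r * v r := by
    intro v; funext r; rw [hM]; simp [Matrix.mulVec_diagonal]
  have hBd : ∀ v c : Fin (n+1) → ℝ, (B *ᵥ v) ⬝ᵥ c
      = -(v 0 * c 0) + v (Fin.last n) * c (Fin.last n) := by
    intro v c
    have e : (B *ᵥ v) ⬝ᵥ c = ∑ r, (if r = 0 then (-1:ℝ) else if r = Fin.last n then 1 else 0)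
        * (v r * c r) := by
      rw [hB]; simp only [dotProduct, Matrix.mulVec_diagonal]
      exact Finset.sum_congr rfl fun r _ => by ring
    rw [e, bsum hn]
  have hBd' : ∀ v c : Fin (n+1) → ℝ, v ⬝ᵥ (B *ᵥ c)
      = -(v 0 * c 0) + v (Fin.last n) * c (Fin.last n) := by
    intro v c
    have e : v ⬝ᵥ (B *ᵥ c) = ∑ r, (if r = 0 then (-1:ℝ) else if r = Fin.last n then 1 else 0)
        * (v r * c r) := by
      rw [hB]; simp only [dotProduct, Matrix.mulVec_diagonal]
      exact Finset.sum_congr rfl fun r _ => by ring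
    rw [e, bsum hn]
  have hscale : ∀ i (v : Fin (n+1) → ℝ), (h i / 2) • ((2 / h i) • v) = v := by
    intro i v
    have e : (h i / 2) * (2 / h i) = 1 := by
      field_simp
      exact div_self (hh i)
    rw [smul_smul, e, one_smul]
  set ξv : ZMod N → Fin (n+1) → ℝ := fun i r => if r = 0 then ξhat (i-1)
      else if r = Fin.last n then ξhat i else 0 with hξv
  set Fv : ZMod N → Fin (n+1) → ℝ := fun i r => if r = 0 then Fhat (i-1)
      else if r = Fin.last n then Fhat i else 0 with hFv
  have hurel : ∀ i, (Dᵀ * M) *ᵥ ξ i = B *ᵥ ξv i - M *ᵥ ((h i / 2) • u i) := by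
    intro i
    have e : M *ᵥ ((h i / 2) • u i) = -((Dᵀ * M) *ᵥ ξ i) + B *ᵥ ξv i := by
      rw [hu i, hscale, hMv]
    rw [e]; abel
  have hXrel : ∀ i, M *ᵥ ((h i / 2) • X i)
      = -((Dᵀ * M) *ᵥ (fun r => fρ i r * u i r)) + B *ᵥ Fv i := by
    intro i; rw [hX i, hscale, hMv]
  have hMD : M * D = B - Dᵀ * M := eq_sub_of_add_eq hSBP
  have cell : ∀ i, (h i / 2) * ∑ r, w r * ξ i r * X i r
      = -((h i / 2) * ∑ r, w r * fρ i r * (u i r)^2)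
        + ((ξ i 0 - ξhat (i-1)) * (fρ i 0 * u i 0)
           - (ξ i (Fin.last n) - ξhat i) * (fρ i (Fin.last n) * u i (Fin.last n))
           - ξ i 0 * Fhat (i-1) + ξ i (Fin.last n) * Fhat i) := by
    intro i
    have e1 : ξ i ⬝ᵥ (M *ᵥ ((h i / 2) • X i)) = (h i / 2) * ∑ r, w r * ξ i r * X i r := by
      rw [hMd]; simp only [dotProduct, Pi.smul_apply, smul_eq_mul, Finset.mul_sum]
      exact Finset.sum_congr rfl fun r _ => by ring
    have e2 : ξ i ⬝ᵥ ((Dᵀ * M) *ᵥ (fun r => fρ i r * u i r))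
        = ((M * D) *ᵥ ξ i) ⬝ᵥ (fun r => fρ i r * u i r) := by
      rw [Matrix.dotProduct_mulVec, ← Matrix.mulVec_transpose, Matrix.transpose_mul,
        Matrix.transpose_transpose, hM, Matrix.diagonal_transpose, ← hM]
    have e3 : ((M * D) *ᵥ ξ i) ⬝ᵥ (fun r => fρ i r * u i r)
        = (B *ᵥ (ξ i - ξv i)) ⬝ᵥ (fun r => fρ i r * u i r)
          + (M *ᵥ ((h i / 2) • u i)) ⬝ᵥ (fun r => fρ i r * u i r) := by
      rw [hMD, Matrix.sub_mulVec, hurel i, Matrix.mulVec_sub]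
      simp only [sub_dotProduct]
      ring
    have e4 : (M *ᵥ ((h i / 2) • u i)) ⬝ᵥ (fun r => fρ i r * u i r)
        = (h i / 2) * ∑ r, w r * fρ i r * (u i r)^2 := by
      rw [hMd]; simp only [dotProduct, Pi.smul_apply, smul_eq_mul, Finset.mul_sum]
      exact Finset.sum_congr rfl fun r _ => by ring
    have e5 : (B *ᵥ (ξ i - ξv i)) ⬝ᵥ (fun r => fρ i r * u i r)
        = -((ξ i 0 - ξhat (i-1)) * (fρ i 0 * u i 0))
          + (ξ i (Fin.last n) - ξhat i) * (fρ i (Fin.last n) * u i (Fin.last n)) := by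
      rw [hBd]
      have h0 : (ξ i - ξv i) 0 = ξ i 0 - ξhat (i-1) := by simp [hξv, hn0]
      have hl : (ξ i - ξv i) (Fin.last n) = ξ i (Fin.last n) - ξhat i := by
        simp [hξv, hn0, if_neg (Ne.symm hn)]
      rw [h0, hl]
    have e6 : ξ i ⬝ᵥ (B *ᵥ Fv i) = -(ξ i 0 * Fhat (i-1)) + ξ i (Fin.last n) * Fhat i := by
      rw [hBd']
      have h0 : Fv i 0 = Fhat (i-1) := by simp [hFv, hn0]
      have hl : Fv i (Fin.last n) = Fhat i := by simp [hFv, hn0, if_neg (Ne.symm hn)]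
      rw [h0, hl]
    calc (h i / 2) * ∑ r, w r * ξ i r * X i r
        = ξ i ⬝ᵥ (M *ᵥ ((h i / 2) • X i)) := e1.symm
      _ = ξ i ⬝ᵥ (-((Dᵀ * M) *ᵥ (fun r => fρ i r * u i r)) + B *ᵥ Fv i) := by rw [hXrel i]
      _ = -(ξ i ⬝ᵥ ((Dᵀ * M) *ᵥ (fun r => fρ i r * u i r))) + ξ i ⬝ᵥ (B *ᵥ Fv i) := by
          rw [dotProduct_add, dotProduct_neg]
      _ = _ := by rw [e2, e3, e4, e5, e6]; ring
  -- telescoping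
  have key : ∀ i : ZMod N,
      ((ξ i 0 - ξhat (i-1)) * (fρ i 0 * u i 0)
        - (ξ i (Fin.last n) - ξhat i) * (fρ i (Fin.last n) * u i (Fin.last n))
        - ξ i 0 * Fhat (i-1) + ξ i (Fin.last n) * Fhat i)
      = (-(ξ i (Fin.last n) - ξhat i) * (fρ i (Fin.last n) * u i (Fin.last n))
          + ξ i (Fin.last n) * Fhat i)
        + ((ξ ((i-1)+1) 0 - ξhat (i-1)) * (fρ ((i-1)+1) 0 * u ((i-1)+1) 0)
            - ξ ((i-1)+1) 0 * Fhat (i-1)) := by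
    intro i
    rw [sub_add_cancel]
    ring
  have tele : ∑ i, ((ξ i 0 - ξhat (i-1)) * (fρ i 0 * u i 0)
        - (ξ i (Fin.last n) - ξhat i) * (fρ i (Fin.last n) * u i (Fin.last n))
        - ξ i 0 * Fhat (i-1) + ξ i (Fin.last n) * Fhat i)
      = -∑ i, d i * (ξ (i+1) 0 - ξ i (Fin.last n)) := by
    have t1 : ∑ i, ((ξ i 0 - ξhat (i-1)) * (fρ i 0 * u i 0)
        - (ξ i (Fin.last n) - ξhat i) * (fρ i (Fin.last n) * u i (Fin.last n))
        - ξ i 0 * Fhat (i-1) + ξ i (Fin.last n) * Fhat i)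
        = (∑ i, (-(ξ i (Fin.last n) - ξhat i) * (fρ i (Fin.last n) * u i (Fin.last n))
            + ξ i (Fin.last n) * Fhat i))
          + ∑ i, (fun m => (ξ (m+1) 0 - ξhat m) * (fρ (m+1) 0 * u (m+1) 0)
              - ξ (m+1) 0 * Fhat m) (i - 1) := by
      rw [← Finset.sum_add_distrib]
      exact Finset.sum_congr rfl fun i _ => key i
    rw [t1, zshift (fun m => (ξ (m+1) 0 - ξhat m) * (fρ (m+1) 0 * u (m+1) 0)
        - ξ (m+1) 0 * Fhat m), ← Finset.sum_add_distrib, ← Finset.sum_neg_distrib]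
    refine Finset.sum_congr rfl fun i _ => ?_
    rw [hξhat i, hFhat i]
    ring
  calc ∑ i, (h i / 2) * ∑ r, w r * ξ i r * X i r
      = ∑ i, (-((h i / 2) * ∑ r, w r * fρ i r * (u i r)^2)
          + ((ξ i 0 - ξhat (i-1)) * (fρ i 0 * u i 0)
            - (ξ i (Fin.last n) - ξhat i) * (fρ i (Fin.last n) * u i (Fin.last n))
            - ξ i 0 * Fhat (i-1) + ξ i (Fin.last n) * Fhat i)) :=
        Finset.sum_congr rfl fun i _ => cell i
    _ = (∑ i, -((h i / 2) * ∑ r, w r * fρ i r * (u i r)^2))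
          + ∑ i, ((ξ i 0 - ξhat (i-1)) * (fρ i 0 * u i 0)
            - (ξ i (Fin.last n) - ξhat i) * (fρ i (Fin.last n) * u i (Fin.last n))
            - ξ i 0 * Fhat (i-1) + ξ i (Fin.last n) * Fhat i) := Finset.sum_add_distrib
    _ = _ := by rw [tele]; simp only [Finset.sum_neg_distrib]; ring

lemma sum4_reorder {α β γ δ : Type*} [Fintype α] [Fintype β] [Fintype γ] [Fintype δ]
    (f : α → β → γ → δ → ℝ) :
    ∑ i, ∑ j, ∑ r, ∑ s, f i j r s = ∑ j, ∑ s, ∑ i, ∑ r, f i j r s := by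
  rw [Finset.sum_comm]
  exact Finset.sum_congr rfl fun j _ => comm3 (fun i r s => f i j r s)

lemma sum4y_reorder {α β γ δ : Type*} [Fintype α] [Fintype β] [Fintype γ] [Fintype δ]
    (f : α → β → γ → δ → ℝ) :
    ∑ i, ∑ j, ∑ r, ∑ s, f i j r s = ∑ i, ∑ r, ∑ j, ∑ s, f i j r s :=
  Finset.sum_congr rfl fun _ _ => Finset.sum_comm
/-- Discrete entropy inequality for the two-dimensional semi-discrete DG scheme
(Theorem 3.1): along any differentiable solution of the 2D semi-discrete
scheme, the discrete entropy satisfies the exact dissipation identity, hence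
`dẼ/dt ≤ −Ĩ` with `Ĩ ≥ 0`. -/
theorem discrete_entropy_inequality_2d
    (k Nx Ny : ℕ) (hk : 1 ≤ k) [NeZero Nx] [NeZero Ny]
    (hNx : 2 ≤ Nx) (hNy : 2 ≤ Ny)
    (hx : ZMod Nx → ℝ) (hhx : ∀ i, 0 < hx i)
    (hy : ZMod Ny → ℝ) (hhy : ∀ j, 0 < hy j)
    (w : Fin (k+1) → ℝ) (hw : ∀ r, 0 < w r)
    (M B D : Matrix (Fin (k+1)) (Fin (k+1)) ℝ)
    (hM : M = Matrix.diagonal w)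
    (hB : B = Matrix.diagonal
      (fun r => if r = 0 then (-1 : ℝ) else if r = Fin.last k then 1 else 0))
    (hSBP : M * D + Dᵀ * M = B)
    (H f g : ℝ → ℝ)
    (hH : Differentiable ℝ H) (hH' : StrictMono (deriv H))
    (hf : ∀ s, 0 ≤ f s) (hg : Monotone g)
    (V : ZMod Nx → ZMod Ny → Fin (k+1) → Fin (k+1) → ℝ)
    (hVx : ∀ i j s, V i j (Fin.last k) s = V (i+1) j 0 s)
    (hVy : ∀ i j r, V i j r (Fin.last k) = V i (j+1) r 0)
    (K : ZMod Nx → ZMod Ny → Fin (k+1) → Fin (k+1) →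
         ZMod Nx → ZMod Ny → Fin (k+1) → Fin (k+1) → ℝ)
    (hKsym : ∀ i j r s i' j' r' s',
      K i j r s i' j' r' s' = K i' j' r' s' i j r s)
    (hKsvx : ∀ i j s i' j' r' s',
      K i j (Fin.last k) s i' j' r' s' = K (i+1) j 0 s i' j' r' s')
    (hKsvy : ∀ i j r i' j' r' s',
      K i j r (Fin.last k) i' j' r' s' = K i (j+1) r 0 i' j' r' s')
    (ρ ρ' : ℝ → ZMod Nx → ZMod Ny → Fin (k+1) → Fin (k+1) → ℝ)
    (hρ : ∀ t i j r s, HasDerivAt (fun τ => ρ τ i j r s) (ρ' t i j r s) t)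
    (ξ : ℝ → ZMod Nx → ZMod Ny → Fin (k+1) → Fin (k+1) → ℝ)
    (hξ : ∀ t i j r s, ξ t i j r s = deriv H (ρ t i j r s) + V i j r s +
      ∑ i', ∑ j', (hx i' * hy j' / 4) *
        ∑ r', ∑ s', w r' * w s' * K i j r s i' j' r' s' * ρ t i' j' r' s')
    -- central fluxes at x- and y-interfaces
    (ξhatx : ℝ → ZMod Nx → ZMod Ny → Fin (k+1) → ℝ)
    (hξhatx : ∀ t i j s, ξhatx t i j s
      = (ξ t i j (Fin.last k) s + ξ t (i+1) j 0 s) / 2)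
    (ξhaty : ℝ → ZMod Nx → ZMod Ny → Fin (k+1) → ℝ)
    (hξhaty : ∀ t i j r, ξhaty t i j r
      = (ξ t i j r (Fin.last k) + ξ t i (j+1) r 0) / 2)
    -- discrete velocities, columnwise in x and rowwise in y
    (ux uy : ℝ → ZMod Nx → ZMod Ny → Fin (k+1) → Fin (k+1) → ℝ)
    (hux : ∀ t i j s, (fun r => ux t i j r s)
      = (2 / hx i) • (M⁻¹ *ᵥ (-((Dᵀ * M) *ᵥ (fun r => ξ t i j r s))
          + B *ᵥ (fun r => if r = 0 then ξhatx t (i-1) j s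
              else if r = Fin.last k then ξhatx t i j s else 0))))
    (huy : ∀ t i j r, (fun s => uy t i j r s)
      = (2 / hy j) • (M⁻¹ *ᵥ (-((Dᵀ * M) *ᵥ (fun s => ξ t i j r s))
          + B *ᵥ (fun s => if s = 0 then ξhaty t i (j-1) r
              else if s = Fin.last k then ξhaty t i j r else 0))))
    (αx αy : ZMod Nx → ZMod Ny → Fin (k+1) → ℝ)
    (hαx : ∀ i j s, 0 ≤ αx i j s) (hαy : ∀ i j r, 0 ≤ αy i j r)
    -- Lax–Friedrichs fluxes
    (Fxhat : ℝ → ZMod Nx → ZMod Ny → Fin (k+1) → ℝ)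
    (hFxhat : ∀ t i j s, Fxhat t i j s
      = (f (ρ t (i+1) j 0 s) * ux t (i+1) j 0 s
          + f (ρ t i j (Fin.last k) s) * ux t i j (Fin.last k) s) / 2
        + (αx i j s / 2) * (g (ρ t (i+1) j 0 s) - g (ρ t i j (Fin.last k) s)))
    (Fyhat : ℝ → ZMod Nx → ZMod Ny → Fin (k+1) → ℝ)
    (hFyhat : ∀ t i j r, Fyhat t i j r
      = (f (ρ t i (j+1) r 0) * uy t i (j+1) r 0
          + f (ρ t i j r (Fin.last k)) * uy t i j r (Fin.last k)) / 2
        + (αy i j r / 2) * (g (ρ t i (j+1) r 0) - g (ρ t i j r (Fin.last k))))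
    -- the semi-discrete scheme
    (Xop Yop : ℝ → ZMod Nx → ZMod Ny → Fin (k+1) → Fin (k+1) → ℝ)
    (hX : ∀ t i j s, (fun r => Xop t i j r s)
      = (2 / hx i) • (M⁻¹ *ᵥ
          (-((Dᵀ * M) *ᵥ (fun r => f (ρ t i j r s) * ux t i j r s))
            + B *ᵥ (fun r => if r = 0 then Fxhat t (i-1) j s
                else if r = Fin.last k then Fxhat t i j s else 0))))
    (hY : ∀ t i j r, (fun s => Yop t i j r s)
      = (2 / hy j) • (M⁻¹ *ᵥ
          (-((Dᵀ * M) *ᵥ (fun s => f (ρ t i j r s) * uy t i j r s))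
            + B *ᵥ (fun s => if s = 0 then Fyhat t i (j-1) r
                else if s = Fin.last k then Fyhat t i j r else 0))))
    (hscheme : ∀ t i j r s, ρ' t i j r s = Xop t i j r s + Yop t i j r s)
    -- the discrete entropy
    (E : ℝ → ℝ)
    (hE : ∀ t, E t
      = (∑ i, ∑ j, (hx i * hy j / 4) *
          ∑ r, ∑ s, w r * w s * (H (ρ t i j r s) + V i j r s * ρ t i j r s))
      + (1/2) * ∑ i, ∑ j, ∑ i', ∑ j',
          (hx i * hy j / 4) * (hx i' * hy j' / 4) *
          ∑ r, ∑ s, ∑ r', ∑ s', w r * w s * w r' * w s' *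
            K i j r s i' j' r' s' * ρ t i j r s * ρ t i' j' r' s')
    -- the discrete entropy dissipation and the interface jump terms
    (Idis Jx Jy : ℝ → ℝ)
    (hIdis : ∀ t, Idis t = ∑ i, ∑ j, (hx i * hy j / 4) *
      ∑ r, ∑ s, w r * w s * f (ρ t i j r s)
        * ((ux t i j r s)^2 + (uy t i j r s)^2))
    (hJx : ∀ t, Jx t = ∑ i, ∑ j, (hy j / 2) * ∑ s, w s * (αx i j s / 2)
      * (g (ρ t (i+1) j 0 s) - g (ρ t i j (Fin.last k) s))
      * (deriv H (ρ t (i+1) j 0 s) - deriv H (ρ t i j (Fin.last k) s)))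
    (hJy : ∀ t, Jy t = ∑ i, ∑ j, (hx i / 2) * ∑ r, w r * (αy i j r / 2)
      * (g (ρ t i (j+1) r 0) - g (ρ t i j r (Fin.last k)))
      * (deriv H (ρ t i (j+1) r 0) - deriv H (ρ t i j r (Fin.last k))))
    (t : ℝ) :
    HasDerivAt E (-(Idis t) - Jx t - Jy t) t
    ∧ -(Idis t) - Jx t - Jy t ≤ -(Idis t)
    ∧ 0 ≤ Idis t := by
  have hn : (0 : Fin (k+1)) ≠ Fin.last k := by
    intro h
    have := congrArg Fin.val h
    simp only [Fin.val_zero, Fin.val_last] at this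
    omega
  have hwne : ∀ r, w r ≠ 0 := fun r => (hw r).ne'
  -- nonnegativity of Idis
  have hIpos : 0 ≤ Idis t := by
    rw [hIdis]
    refine Finset.sum_nonneg fun i _ => Finset.sum_nonneg fun j _ => mul_nonneg
      (div_nonneg (mul_nonneg (hhx i).le (hhy j).le) (by norm_num))
      (Finset.sum_nonneg fun r _ => Finset.sum_nonneg fun s _ => ?_)
    refine mul_nonneg (mul_nonneg (mul_nonneg (hw r).le (hw s).le) (hf _)) ?_
    positivity
  -- nonnegativity of the jump terms
  have hJxpos : 0 ≤ Jx t := by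
    rw [hJx]
    refine Finset.sum_nonneg fun i _ => Finset.sum_nonneg fun j _ => mul_nonneg
      (div_nonneg (hhy j).le (by norm_num)) (Finset.sum_nonneg fun s _ => ?_)
    rw [mul_assoc]
    exact mul_nonneg (mul_nonneg (hw s).le (by linarith [hαx i j s]))
      (prod_nonneg_mono hg hH'.monotone _ _)
  have hJypos : 0 ≤ Jy t := by
    rw [hJy]
    refine Finset.sum_nonneg fun i _ => Finset.sum_nonneg fun j _ => mul_nonneg
      (div_nonneg (hhx i).le (by norm_num)) (Finset.sum_nonneg fun r _ => ?_)
    rw [mul_assoc]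
    exact mul_nonneg (mul_nonneg (hw r).le (by linarith [hαy i j r]))
      (prod_nonneg_mono hg hH'.monotone _ _)
  have jumpx : ∀ i j s, ξ t (i+1) j 0 s - ξ t i j (Fin.last k) s
      = deriv H (ρ t (i+1) j 0 s) - deriv H (ρ t i j (Fin.last k) s) := by
    intro i j s
    rw [hξ t (i+1) j 0 s, hξ t i j (Fin.last k) s, hVx i j s]
    have hKs : (∑ i', ∑ j', hx i' * hy j' / 4 * ∑ r', ∑ s',
          w r' * w s' * K i j (Fin.last k) s i' j' r' s' * ρ t i' j' r' s')
        = ∑ i', ∑ j', hx i' * hy j' / 4 * ∑ r', ∑ s',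
          w r' * w s' * K (i+1) j 0 s i' j' r' s' * ρ t i' j' r' s' := by
      refine Finset.sum_congr rfl fun i' _ => Finset.sum_congr rfl fun j' _ => ?_
      exact congrArg (fun z => hx i' * hy j' / 4 * z)
        (Finset.sum_congr rfl fun r' _ => Finset.sum_congr rfl fun s' _ => by rw [hKsvx])
    rw [hKs]; ring
  have jumpy : ∀ i j r, ξ t i (j+1) r 0 - ξ t i j r (Fin.last k)
      = deriv H (ρ t i (j+1) r 0) - deriv H (ρ t i j r (Fin.last k)) := by
    intro i j r
    rw [hξ t i (j+1) r 0, hξ t i j r (Fin.last k), hVy i j r]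
    have hKs : (∑ i', ∑ j', hx i' * hy j' / 4 * ∑ r', ∑ s',
          w r' * w s' * K i j r (Fin.last k) i' j' r' s' * ρ t i' j' r' s')
        = ∑ i', ∑ j', hx i' * hy j' / 4 * ∑ r', ∑ s',
          w r' * w s' * K i (j+1) r 0 i' j' r' s' * ρ t i' j' r' s' := by
      refine Finset.sum_congr rfl fun i' _ => Finset.sum_congr rfl fun j' _ => ?_
      exact congrArg (fun z => hx i' * hy j' / 4 * z)
        (Finset.sum_congr rfl fun r' _ => Finset.sum_congr rfl fun s' _ => by rw [hKsvy])
    rw [hKs]; ring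
  have oneDx : ∀ j s, (∑ i, hx i / 2 * ∑ r, w r * ξ t i j r s * Xop t i j r s)
      = -∑ i, hx i / 2 * ∑ r, w r * f (ρ t i j r s) * ux t i j r s ^ 2
        - ∑ i, (αx i j s / 2 * (g (ρ t (i+1) j 0 s) - g (ρ t i j (Fin.last k) s)))
            * (ξ t (i+1) j 0 s - ξ t i j (Fin.last k) s) := by
    intro j s
    exact oneD hn w hwne M B D hM hB hSBP hx (fun i => (hhx i).ne')
      (fun i r => ξ t i j r s) (fun i r => f (ρ t i j r s)) (fun i r => ux t i j r s)
      (fun i r => Xop t i j r s) (fun i => ξhatx t i j s) (fun i => Fxhat t i j s)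
      (fun i => αx i j s / 2 * (g (ρ t (i+1) j 0 s) - g (ρ t i j (Fin.last k) s)))
      (fun i => hξhatx t i j s) (fun i => hux t i j s) (fun i => hFxhat t i j s)
      (fun i => hX t i j s)
  have oneDy : ∀ i r, (∑ j, hy j / 2 * ∑ s, w s * ξ t i j r s * Yop t i j r s)
      = -∑ j, hy j / 2 * ∑ s, w s * f (ρ t i j r s) * uy t i j r s ^ 2
        - ∑ j, (αy i j r / 2 * (g (ρ t i (j+1) r 0) - g (ρ t i j r (Fin.last k))))
            * (ξ t i (j+1) r 0 - ξ t i j r (Fin.last k)) := by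
    intro i r
    exact oneD hn w hwne M B D hM hB hSBP hy (fun j => (hhy j).ne')
      (fun j s => ξ t i j r s) (fun j s => f (ρ t i j r s)) (fun j s => uy t i j r s)
      (fun j s => Yop t i j r s) (fun j => ξhaty t i j r) (fun j => Fyhat t i j r)
      (fun j => αy i j r / 2 * (g (ρ t i (j+1) r 0) - g (ρ t i j r (Fin.last k))))
      (fun j => hξhaty t i j r) (fun j => huy t i j r) (fun j => hFyhat t i j r)
      (fun j => hY t i j r)
  have hder : HasDerivAt E (-(Idis t) - Jx t - Jy t) t := by
    -- derivative of E
    have hDlin : HasDerivAt (fun τ => ∑ i, ∑ j, hx i * hy j / 4 *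
          ∑ r, ∑ s, w r * w s * (H (ρ τ i j r s) + V i j r s * ρ τ i j r s))
        (∑ i, ∑ j, hx i * hy j / 4 * ∑ r, ∑ s, w r * w s *
          (deriv H (ρ t i j r s) * ρ' t i j r s + V i j r s * ρ' t i j r s)) t := by
      refine HasDerivAt.fun_sum fun i _ => HasDerivAt.fun_sum fun j _ => HasDerivAt.const_mul _
        (HasDerivAt.fun_sum fun r _ => HasDerivAt.fun_sum fun s _ => HasDerivAt.const_mul _
          (HasDerivAt.add ?_ ((hρ t i j r s).const_mul _)))
      exact HasDerivAt.comp t (hH (ρ t i j r s)).hasDerivAt (hρ t i j r s)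
    have hDquad : HasDerivAt (fun τ => ∑ i, ∑ j, ∑ i', ∑ j',
          hx i * hy j / 4 * (hx i' * hy j' / 4) * ∑ r, ∑ s, ∑ r', ∑ s',
            w r * w s * w r' * w s' * K i j r s i' j' r' s' * ρ τ i j r s * ρ τ i' j' r' s')
        (∑ i, ∑ j, ∑ i', ∑ j', hx i * hy j / 4 * (hx i' * hy j' / 4) *
          ∑ r, ∑ s, ∑ r', ∑ s',
            (w r * w s * w r' * w s' * K i j r s i' j' r' s' * ρ' t i j r s * ρ t i' j' r' s'
              + w r * w s * w r' * w s' * K i j r s i' j' r' s' * ρ t i j r s * ρ' t i' j' r' s')) t := by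
      refine HasDerivAt.fun_sum fun i _ => HasDerivAt.fun_sum fun j _ => HasDerivAt.fun_sum fun i' _ =>
        HasDerivAt.fun_sum fun j' _ => HasDerivAt.const_mul _
          (HasDerivAt.fun_sum fun r _ => HasDerivAt.fun_sum fun s _ => HasDerivAt.fun_sum fun r' _ =>
            HasDerivAt.fun_sum fun s' _ => ((hρ t i j r s).const_mul _).mul (hρ t i' j' r' s'))
    have hD : HasDerivAt E
        ((∑ i, ∑ j, hx i * hy j / 4 * ∑ r, ∑ s, w r * w s *
          (deriv H (ρ t i j r s) * ρ' t i j r s + V i j r s * ρ' t i j r s))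
        + 1/2 * ∑ i, ∑ j, ∑ i', ∑ j', hx i * hy j / 4 * (hx i' * hy j' / 4) *
          ∑ r, ∑ s, ∑ r', ∑ s',
            (w r * w s * w r' * w s' * K i j r s i' j' r' s' * ρ' t i j r s * ρ t i' j' r' s'
              + w r * w s * w r' * w s' * K i j r s i' j' r' s' * ρ t i j r s * ρ' t i' j' r' s')) t := by
      rw [funext hE]
      exact hDlin.add (hDquad.const_mul (1/2))
    -- the quadratic symmetrization
    have swap := sum_swap8 (fun p q : (ZMod Nx × ZMod Ny × Fin (k+1) × Fin (k+1)) =>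
      hx p.1 * hy p.2.1 / 4 * (hx q.1 * hy q.2.1 / 4) *
        (w p.2.2.1 * w p.2.2.2 * w q.2.2.1 * w q.2.2.2 *
          K p.1 p.2.1 p.2.2.1 p.2.2.2 q.1 q.2.1 q.2.2.1 q.2.2.2 *
          ρ' t p.1 p.2.1 p.2.2.1 p.2.2.2 * ρ t q.1 q.2.1 q.2.2.1 q.2.2.2))
    dsimp only at swap
    have hG2 : (∑ i, ∑ j, ∑ i', ∑ j', ∑ r, ∑ s, ∑ r', ∑ s',
          hx i * hy j / 4 * (hx i' * hy j' / 4) *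
            (w r * w s * w r' * w s' * K i j r s i' j' r' s' * ρ t i j r s * ρ' t i' j' r' s'))
        = ∑ i, ∑ j, ∑ i', ∑ j', ∑ r, ∑ s, ∑ r', ∑ s',
          hx i * hy j / 4 * (hx i' * hy j' / 4) *
            (w r * w s * w r' * w s' * K i j r s i' j' r' s' * ρ' t i j r s * ρ t i' j' r' s') := by
      refine Eq.trans ?_ swap.symm
      refine Finset.sum_congr rfl fun i _ => Finset.sum_congr rfl fun j _ =>
        Finset.sum_congr rfl fun i' _ => Finset.sum_congr rfl fun j' _ =>
        Finset.sum_congr rfl fun r _ => Finset.sum_congr rfl fun s _ =>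
        Finset.sum_congr rfl fun r' _ => Finset.sum_congr rfl fun s' _ => ?_
      rw [hKsym i' j' r' s' i j r s]
      ring
    have hQDsplit : (∑ i, ∑ j, ∑ i', ∑ j', hx i * hy j / 4 * (hx i' * hy j' / 4) *
          ∑ r, ∑ s, ∑ r', ∑ s',
            (w r * w s * w r' * w s' * K i j r s i' j' r' s' * ρ' t i j r s * ρ t i' j' r' s'
              + w r * w s * w r' * w s' * K i j r s i' j' r' s' * ρ t i j r s * ρ' t i' j' r' s'))
        = (∑ i, ∑ j, ∑ i', ∑ j', ∑ r, ∑ s, ∑ r', ∑ s',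
            hx i * hy j / 4 * (hx i' * hy j' / 4) *
              (w r * w s * w r' * w s' * K i j r s i' j' r' s' * ρ' t i j r s * ρ t i' j' r' s'))
          + ∑ i, ∑ j, ∑ i', ∑ j', ∑ r, ∑ s, ∑ r', ∑ s',
            hx i * hy j / 4 * (hx i' * hy j' / 4) *
              (w r * w s * w r' * w s' * K i j r s i' j' r' s' * ρ t i j r s * ρ' t i' j' r' s') := by
      simp only [Finset.mul_sum, mul_add, Finset.sum_add_distrib]
    -- KP equals the symmetrized half
    have hKP1 : (∑ i, ∑ j, ∑ i', ∑ j', ∑ r, ∑ s, ∑ r', ∑ s',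
          hx i * hy j / 4 * (hx i' * hy j' / 4) *
            (w r * w s * w r' * w s' * K i j r s i' j' r' s' * ρ' t i j r s * ρ t i' j' r' s'))
        = ∑ i, ∑ j, hx i * hy j / 4 * ∑ r, ∑ s, w r * w s *
            ((∑ i', ∑ j', hx i' * hy j' / 4 * ∑ r', ∑ s',
                w r' * w s' * K i j r s i' j' r' s' * ρ t i' j' r' s') * ρ' t i j r s) := by
      calc (∑ i, ∑ j, ∑ i', ∑ j', ∑ r, ∑ s, ∑ r', ∑ s',
              hx i * hy j / 4 * (hx i' * hy j' / 4) *
                (w r * w s * w r' * w s' * K i j r s i' j' r' s' * ρ' t i j r s * ρ t i' j' r' s'))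
          = ∑ i, ∑ j, ∑ r, ∑ s, ∑ i', ∑ j', ∑ r', ∑ s',
              hx i * hy j / 4 * (hx i' * hy j' / 4) *
                (w r * w s * w r' * w s' * K i j r s i' j' r' s' * ρ' t i j r s * ρ t i' j' r' s') :=
            Finset.sum_congr rfl fun i _ => Finset.sum_congr rfl fun j _ =>
              comm22 (fun i' j' r s => ∑ r', ∑ s',
                hx i * hy j / 4 * (hx i' * hy j' / 4) *
                  (w r * w s * w r' * w s' * K i j r s i' j' r' s' * ρ' t i j r s * ρ t i' j' r' s'))
        _ = _ := by
            simp only [Finset.mul_sum, Finset.sum_mul]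
            refine Finset.sum_congr rfl fun i _ => Finset.sum_congr rfl fun j _ =>
              Finset.sum_congr rfl fun r _ => Finset.sum_congr rfl fun s _ =>
              Finset.sum_congr rfl fun i' _ => Finset.sum_congr rfl fun j' _ =>
              Finset.sum_congr rfl fun r' _ => Finset.sum_congr rfl fun s' _ => ?_
            ring
    -- expansion of Sxi
    have hin : ∀ i j, (∑ r, ∑ s, w r * w s * ξ t i j r s * ρ' t i j r s)
        = (∑ r, ∑ s, w r * w s *
            (deriv H (ρ t i j r s) * ρ' t i j r s + V i j r s * ρ' t i j r s))
          + ∑ r, ∑ s, w r * w s *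
            ((∑ i', ∑ j', hx i' * hy j' / 4 * ∑ r', ∑ s',
                w r' * w s' * K i j r s i' j' r' s' * ρ t i' j' r' s') * ρ' t i j r s) := by
      intro i j
      calc (∑ r, ∑ s, w r * w s * ξ t i j r s * ρ' t i j r s)
          = ∑ r, ∑ s, (w r * w s *
              (deriv H (ρ t i j r s) * ρ' t i j r s + V i j r s * ρ' t i j r s)
            + w r * w s *
              ((∑ i', ∑ j', hx i' * hy j' / 4 * ∑ r', ∑ s',
                  w r' * w s' * K i j r s i' j' r' s' * ρ t i' j' r' s') * ρ' t i j r s)) := by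
            refine Finset.sum_congr rfl fun r _ => Finset.sum_congr rfl fun s _ => ?_
            rw [hξ t i j r s]; ring
        _ = _ := by simp only [Finset.sum_add_distrib]
    have hSxi : (∑ i, ∑ j, hx i * hy j / 4 * ∑ r, ∑ s, w r * w s * ξ t i j r s * ρ' t i j r s)
        = (∑ i, ∑ j, hx i * hy j / 4 * ∑ r, ∑ s, w r * w s *
            (deriv H (ρ t i j r s) * ρ' t i j r s + V i j r s * ρ' t i j r s))
          + ∑ i, ∑ j, hx i * hy j / 4 * ∑ r, ∑ s, w r * w s *
            ((∑ i', ∑ j', hx i' * hy j' / 4 * ∑ r', ∑ s',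
                w r' * w s' * K i j r s i' j' r' s' * ρ t i' j' r' s') * ρ' t i j r s) := by
      calc (∑ i, ∑ j, hx i * hy j / 4 * ∑ r, ∑ s, w r * w s * ξ t i j r s * ρ' t i j r s)
          = ∑ i, ∑ j, (hx i * hy j / 4 * (∑ r, ∑ s, w r * w s *
              (deriv H (ρ t i j r s) * ρ' t i j r s + V i j r s * ρ' t i j r s))
            + hx i * hy j / 4 * ∑ r, ∑ s, w r * w s *
              ((∑ i', ∑ j', hx i' * hy j' / 4 * ∑ r', ∑ s',
                  w r' * w s' * K i j r s i' j' r' s' * ρ t i' j' r' s') * ρ' t i j r s)) := by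
            refine Finset.sum_congr rfl fun i _ => Finset.sum_congr rfl fun j _ => ?_
            rw [hin i j, mul_add]
        _ = _ := by simp only [Finset.sum_add_distrib]
    -- splitting along the scheme
    have hinXY : ∀ i j, (∑ r, ∑ s, w r * w s * ξ t i j r s * ρ' t i j r s)
        = (∑ r, ∑ s, w r * w s * ξ t i j r s * Xop t i j r s)
          + ∑ r, ∑ s, w r * w s * ξ t i j r s * Yop t i j r s := by
      intro i j
      calc (∑ r, ∑ s, w r * w s * ξ t i j r s * ρ' t i j r s)
          = ∑ r, ∑ s, (w r * w s * ξ t i j r s * Xop t i j r s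
              + w r * w s * ξ t i j r s * Yop t i j r s) := by
            refine Finset.sum_congr rfl fun r _ => Finset.sum_congr rfl fun s _ => ?_
            rw [hscheme t i j r s]; ring
        _ = _ := by simp only [Finset.sum_add_distrib]
    have hSplitXY : (∑ i, ∑ j, hx i * hy j / 4 *
          ∑ r, ∑ s, w r * w s * ξ t i j r s * ρ' t i j r s)
        = (∑ i, ∑ j, hx i * hy j / 4 * ∑ r, ∑ s, w r * w s * ξ t i j r s * Xop t i j r s)
          + ∑ i, ∑ j, hx i * hy j / 4 * ∑ r, ∑ s, w r * w s * ξ t i j r s * Yop t i j r s := by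
      calc (∑ i, ∑ j, hx i * hy j / 4 * ∑ r, ∑ s, w r * w s * ξ t i j r s * ρ' t i j r s)
          = ∑ i, ∑ j, (hx i * hy j / 4 *
              (∑ r, ∑ s, w r * w s * ξ t i j r s * Xop t i j r s)
            + hx i * hy j / 4 * ∑ r, ∑ s, w r * w s * ξ t i j r s * Yop t i j r s) := by
            refine Finset.sum_congr rfl fun i _ => Finset.sum_congr rfl fun j _ => ?_
            rw [hinXY i j, mul_add]
        _ = _ := by simp only [Finset.sum_add_distrib]
    -- x-direction
    have reorderX : (∑ i, ∑ j, hx i * hy j / 4 *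
          ∑ r, ∑ s, w r * w s * ξ t i j r s * Xop t i j r s)
        = ∑ j, ∑ s, hy j / 2 * w s * ∑ i, hx i / 2 *
            ∑ r, w r * ξ t i j r s * Xop t i j r s := by
      calc (∑ i, ∑ j, hx i * hy j / 4 * ∑ r, ∑ s, w r * w s * ξ t i j r s * Xop t i j r s)
          = ∑ i, ∑ j, ∑ r, ∑ s, hx i * hy j / 4 *
              (w r * w s * ξ t i j r s * Xop t i j r s) := by
            simp only [Finset.mul_sum]
        _ = ∑ j, ∑ s, ∑ i, ∑ r, hx i * hy j / 4 *
              (w r * w s * ξ t i j r s * Xop t i j r s) := sum4_reorder _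
        _ = _ := by
            simp only [Finset.mul_sum]
            refine Finset.sum_congr rfl fun j _ => Finset.sum_congr rfl fun s _ =>
              Finset.sum_congr rfl fun i _ => Finset.sum_congr rfl fun r _ => ?_
            ring
    have reorderIX : (∑ j, ∑ s, hy j / 2 * w s * ∑ i, hx i / 2 *
          ∑ r, w r * f (ρ t i j r s) * ux t i j r s ^ 2)
        = ∑ i, ∑ j, hx i * hy j / 4 *
            ∑ r, ∑ s, w r * w s * f (ρ t i j r s) * ux t i j r s ^ 2 := by
      calc (∑ j, ∑ s, hy j / 2 * w s * ∑ i, hx i / 2 *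
            ∑ r, w r * f (ρ t i j r s) * ux t i j r s ^ 2)
          = ∑ j, ∑ s, ∑ i, ∑ r, hy j / 2 * w s *
              (hx i / 2 * (w r * f (ρ t i j r s) * ux t i j r s ^ 2)) := by
            simp only [Finset.mul_sum]
        _ = ∑ i, ∑ j, ∑ r, ∑ s, hy j / 2 * w s *
              (hx i / 2 * (w r * f (ρ t i j r s) * ux t i j r s ^ 2)) :=
            (sum4_reorder (fun i j r s => hy j / 2 * w s *
              (hx i / 2 * (w r * f (ρ t i j r s) * ux t i j r s ^ 2)))).symm
        _ = _ := by
            simp only [Finset.mul_sum]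
            refine Finset.sum_congr rfl fun i _ => Finset.sum_congr rfl fun j _ =>
              Finset.sum_congr rfl fun r _ => Finset.sum_congr rfl fun s _ => ?_
            ring
    have reorderJX : (∑ j, ∑ s, hy j / 2 * w s * ∑ i,
          (αx i j s / 2 * (g (ρ t (i+1) j 0 s) - g (ρ t i j (Fin.last k) s)))
            * (deriv H (ρ t (i+1) j 0 s) - deriv H (ρ t i j (Fin.last k) s)))
        = Jx t := by
      rw [hJx]
      calc (∑ j, ∑ s, hy j / 2 * w s * ∑ i,
            (αx i j s / 2 * (g (ρ t (i+1) j 0 s) - g (ρ t i j (Fin.last k) s)))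
              * (deriv H (ρ t (i+1) j 0 s) - deriv H (ρ t i j (Fin.last k) s)))
          = ∑ j, ∑ s, ∑ i, hy j / 2 * w s *
              ((αx i j s / 2 * (g (ρ t (i+1) j 0 s) - g (ρ t i j (Fin.last k) s)))
                * (deriv H (ρ t (i+1) j 0 s) - deriv H (ρ t i j (Fin.last k) s))) := by
            simp only [Finset.mul_sum]
        _ = ∑ i, ∑ j, ∑ s, hy j / 2 * w s *
              ((αx i j s / 2 * (g (ρ t (i+1) j 0 s) - g (ρ t i j (Fin.last k) s)))
                * (deriv H (ρ t (i+1) j 0 s) - deriv H (ρ t i j (Fin.last k) s))) :=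
            comm3 _
        _ = _ := by
            simp only [Finset.mul_sum]
            refine Finset.sum_congr rfl fun i _ => Finset.sum_congr rfl fun j _ =>
              Finset.sum_congr rfl fun s _ => ?_
            ring
    have stepX : (∑ i, ∑ j, hx i * hy j / 4 *
          ∑ r, ∑ s, w r * w s * ξ t i j r s * Xop t i j r s)
        = -(∑ i, ∑ j, hx i * hy j / 4 *
            ∑ r, ∑ s, w r * w s * f (ρ t i j r s) * ux t i j r s ^ 2) - Jx t := by
      rw [reorderX, ← reorderIX, ← reorderJX]
      have hjs : ∀ j s, (hy j / 2 * w s * ∑ i, hx i / 2 *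
            ∑ r, w r * ξ t i j r s * Xop t i j r s)
          = -(hy j / 2 * w s * ∑ i, hx i / 2 *
              ∑ r, w r * f (ρ t i j r s) * ux t i j r s ^ 2)
            + -(hy j / 2 * w s * ∑ i,
              (αx i j s / 2 * (g (ρ t (i+1) j 0 s) - g (ρ t i j (Fin.last k) s)))
                * (deriv H (ρ t (i+1) j 0 s) - deriv H (ρ t i j (Fin.last k) s))) := by
        intro j s
        rw [oneDx j s]
        have hj : (∑ i, (αx i j s / 2 * (g (ρ t (i+1) j 0 s) - g (ρ t i j (Fin.last k) s)))
              * (ξ t (i+1) j 0 s - ξ t i j (Fin.last k) s))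
            = ∑ i, (αx i j s / 2 * (g (ρ t (i+1) j 0 s) - g (ρ t i j (Fin.last k) s)))
              * (deriv H (ρ t (i+1) j 0 s) - deriv H (ρ t i j (Fin.last k) s)) :=
          Finset.sum_congr rfl fun i _ => by rw [jumpx i j s]
        rw [hj]; ring
      calc (∑ j, ∑ s, hy j / 2 * w s * ∑ i, hx i / 2 *
            ∑ r, w r * ξ t i j r s * Xop t i j r s)
          = ∑ j, ∑ s, (-(hy j / 2 * w s * ∑ i, hx i / 2 *
                ∑ r, w r * f (ρ t i j r s) * ux t i j r s ^ 2)
              + -(hy j / 2 * w s * ∑ i,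
                (αx i j s / 2 * (g (ρ t (i+1) j 0 s) - g (ρ t i j (Fin.last k) s)))
                  * (deriv H (ρ t (i+1) j 0 s) - deriv H (ρ t i j (Fin.last k) s)))) :=
            Finset.sum_congr rfl fun j _ => Finset.sum_congr rfl fun s _ => hjs j s
        _ = _ := by
            simp only [Finset.sum_add_distrib, Finset.sum_neg_distrib]
            ring
    -- y-direction
    have reorderY : (∑ i, ∑ j, hx i * hy j / 4 *
          ∑ r, ∑ s, w r * w s * ξ t i j r s * Yop t i j r s)
        = ∑ i, ∑ r, hx i / 2 * w r * ∑ j, hy j / 2 *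
            ∑ s, w s * ξ t i j r s * Yop t i j r s := by
      calc (∑ i, ∑ j, hx i * hy j / 4 * ∑ r, ∑ s, w r * w s * ξ t i j r s * Yop t i j r s)
          = ∑ i, ∑ j, ∑ r, ∑ s, hx i * hy j / 4 *
              (w r * w s * ξ t i j r s * Yop t i j r s) := by
            simp only [Finset.mul_sum]
        _ = ∑ i, ∑ r, ∑ j, ∑ s, hx i * hy j / 4 *
              (w r * w s * ξ t i j r s * Yop t i j r s) := sum4y_reorder _
        _ = _ := by
            simp only [Finset.mul_sum]
            refine Finset.sum_congr rfl fun i _ => Finset.sum_congr rfl fun r _ =>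
              Finset.sum_congr rfl fun j _ => Finset.sum_congr rfl fun s _ => ?_
            ring
    have reorderIY : (∑ i, ∑ r, hx i / 2 * w r * ∑ j, hy j / 2 *
          ∑ s, w s * f (ρ t i j r s) * uy t i j r s ^ 2)
        = ∑ i, ∑ j, hx i * hy j / 4 *
            ∑ r, ∑ s, w r * w s * f (ρ t i j r s) * uy t i j r s ^ 2 := by
      calc (∑ i, ∑ r, hx i / 2 * w r * ∑ j, hy j / 2 *
            ∑ s, w s * f (ρ t i j r s) * uy t i j r s ^ 2)
          = ∑ i, ∑ r, ∑ j, ∑ s, hx i / 2 * w r *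
              (hy j / 2 * (w s * f (ρ t i j r s) * uy t i j r s ^ 2)) := by
            simp only [Finset.mul_sum]
        _ = ∑ i, ∑ j, ∑ r, ∑ s, hx i / 2 * w r *
              (hy j / 2 * (w s * f (ρ t i j r s) * uy t i j r s ^ 2)) :=
            (sum4y_reorder (fun i j r s => hx i / 2 * w r *
              (hy j / 2 * (w s * f (ρ t i j r s) * uy t i j r s ^ 2)))).symm
        _ = _ := by
            simp only [Finset.mul_sum]
            refine Finset.sum_congr rfl fun i _ => Finset.sum_congr rfl fun j _ =>
              Finset.sum_congr rfl fun r _ => Finset.sum_congr rfl fun s _ => ?_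
            ring
    have reorderJY : (∑ i, ∑ r, hx i / 2 * w r * ∑ j,
          (αy i j r / 2 * (g (ρ t i (j+1) r 0) - g (ρ t i j r (Fin.last k))))
            * (deriv H (ρ t i (j+1) r 0) - deriv H (ρ t i j r (Fin.last k))))
        = Jy t := by
      rw [hJy]
      calc (∑ i, ∑ r, hx i / 2 * w r * ∑ j,
            (αy i j r / 2 * (g (ρ t i (j+1) r 0) - g (ρ t i j r (Fin.last k))))
              * (deriv H (ρ t i (j+1) r 0) - deriv H (ρ t i j r (Fin.last k))))
          = ∑ i, ∑ r, ∑ j, hx i / 2 * w r *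
              ((αy i j r / 2 * (g (ρ t i (j+1) r 0) - g (ρ t i j r (Fin.last k))))
                * (deriv H (ρ t i (j+1) r 0) - deriv H (ρ t i j r (Fin.last k)))) := by
            simp only [Finset.mul_sum]
        _ = ∑ i, ∑ j, ∑ r, hx i / 2 * w r *
              ((αy i j r / 2 * (g (ρ t i (j+1) r 0) - g (ρ t i j r (Fin.last k))))
                * (deriv H (ρ t i (j+1) r 0) - deriv H (ρ t i j r (Fin.last k)))) :=
            Finset.sum_congr rfl fun i _ => Finset.sum_comm
        _ = _ := by
            simp only [Finset.mul_sum]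
            refine Finset.sum_congr rfl fun i _ => Finset.sum_congr rfl fun j _ =>
              Finset.sum_congr rfl fun r _ => ?_
            ring
    have stepY : (∑ i, ∑ j, hx i * hy j / 4 *
          ∑ r, ∑ s, w r * w s * ξ t i j r s * Yop t i j r s)
        = -(∑ i, ∑ j, hx i * hy j / 4 *
            ∑ r, ∑ s, w r * w s * f (ρ t i j r s) * uy t i j r s ^ 2) - Jy t := by
      rw [reorderY, ← reorderIY, ← reorderJY]
      have hjs : ∀ i r, (hx i / 2 * w r * ∑ j, hy j / 2 *
            ∑ s, w s * ξ t i j r s * Yop t i j r s)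
          = -(hx i / 2 * w r * ∑ j, hy j / 2 *
              ∑ s, w s * f (ρ t i j r s) * uy t i j r s ^ 2)
            + -(hx i / 2 * w r * ∑ j,
              (αy i j r / 2 * (g (ρ t i (j+1) r 0) - g (ρ t i j r (Fin.last k))))
                * (deriv H (ρ t i (j+1) r 0) - deriv H (ρ t i j r (Fin.last k)))) := by
        intro i r
        rw [oneDy i r]
        have hj : (∑ j, (αy i j r / 2 * (g (ρ t i (j+1) r 0) - g (ρ t i j r (Fin.last k))))
              * (ξ t i (j+1) r 0 - ξ t i j r (Fin.last k)))
            = ∑ j, (αy i j r / 2 * (g (ρ t i (j+1) r 0) - g (ρ t i j r (Fin.last k))))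
              * (deriv H (ρ t i (j+1) r 0) - deriv H (ρ t i j r (Fin.last k))) :=
          Finset.sum_congr rfl fun j _ => by rw [jumpy i j r]
        rw [hj]; ring
      calc (∑ i, ∑ r, hx i / 2 * w r * ∑ j, hy j / 2 *
            ∑ s, w s * ξ t i j r s * Yop t i j r s)
          = ∑ i, ∑ r, (-(hx i / 2 * w r * ∑ j, hy j / 2 *
                ∑ s, w s * f (ρ t i j r s) * uy t i j r s ^ 2)
              + -(hx i / 2 * w r * ∑ j,
                (αy i j r / 2 * (g (ρ t i (j+1) r 0) - g (ρ t i j r (Fin.last k))))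
                  * (deriv H (ρ t i (j+1) r 0) - deriv H (ρ t i j r (Fin.last k))))) :=
            Finset.sum_congr rfl fun i _ => Finset.sum_congr rfl fun r _ => hjs i r
        _ = _ := by
            simp only [Finset.sum_add_distrib, Finset.sum_neg_distrib]
            ring
    -- splitting Idis
    have hIsplit : Idis t
        = (∑ i, ∑ j, hx i * hy j / 4 *
            ∑ r, ∑ s, w r * w s * f (ρ t i j r s) * ux t i j r s ^ 2)
          + ∑ i, ∑ j, hx i * hy j / 4 *
            ∑ r, ∑ s, w r * w s * f (ρ t i j r s) * uy t i j r s ^ 2 := by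
      rw [hIdis]
      calc (∑ i, ∑ j, hx i * hy j / 4 * ∑ r, ∑ s, w r * w s * f (ρ t i j r s) *
              (ux t i j r s ^ 2 + uy t i j r s ^ 2))
          = ∑ i, ∑ j, (hx i * hy j / 4 *
              (∑ r, ∑ s, w r * w s * f (ρ t i j r s) * ux t i j r s ^ 2)
            + hx i * hy j / 4 *
              ∑ r, ∑ s, w r * w s * f (ρ t i j r s) * uy t i j r s ^ 2) := by
            refine Finset.sum_congr rfl fun i _ => Finset.sum_congr rfl fun j _ => ?_
            rw [show (∑ r, ∑ s, w r * w s * f (ρ t i j r s) *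
                (ux t i j r s ^ 2 + uy t i j r s ^ 2))
                = (∑ r, ∑ s, w r * w s * f (ρ t i j r s) * ux t i j r s ^ 2)
                  + ∑ r, ∑ s, w r * w s * f (ρ t i j r s) * uy t i j r s ^ 2 from by
              rw [← Finset.sum_add_distrib]
              refine Finset.sum_congr rfl fun r _ => ?_
              rw [← Finset.sum_add_distrib]
              refine Finset.sum_congr rfl fun s _ => ?_
              ring, mul_add]
        _ = _ := by simp only [Finset.sum_add_distrib]
    -- final value identity
    have hval : (∑ i, ∑ j, hx i * hy j / 4 * ∑ r, ∑ s, w r * w s *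
          (deriv H (ρ t i j r s) * ρ' t i j r s + V i j r s * ρ' t i j r s))
        + 1/2 * ∑ i, ∑ j, ∑ i', ∑ j', hx i * hy j / 4 * (hx i' * hy j' / 4) *
          ∑ r, ∑ s, ∑ r', ∑ s',
            (w r * w s * w r' * w s' * K i j r s i' j' r' s' * ρ' t i j r s * ρ t i' j' r' s'
              + w r * w s * w r' * w s' * K i j r s i' j' r' s' * ρ t i j r s * ρ' t i' j' r' s')
        = -(Idis t) - Jx t - Jy t := by
      rw [hQDsplit, hG2, hKP1]
      have : (∑ i, ∑ j, hx i * hy j / 4 * ∑ r, ∑ s, w r * w s *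
            (deriv H (ρ t i j r s) * ρ' t i j r s + V i j r s * ρ' t i j r s))
          + 1/2 * ((∑ i, ∑ j, hx i * hy j / 4 * ∑ r, ∑ s, w r * w s *
              ((∑ i', ∑ j', hx i' * hy j' / 4 * ∑ r', ∑ s',
                  w r' * w s' * K i j r s i' j' r' s' * ρ t i' j' r' s') * ρ' t i j r s))
            + ∑ i, ∑ j, hx i * hy j / 4 * ∑ r, ∑ s, w r * w s *
              ((∑ i', ∑ j', hx i' * hy j' / 4 * ∑ r', ∑ s',
                  w r' * w s' * K i j r s i' j' r' s' * ρ t i' j' r' s') * ρ' t i j r s))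
          = (∑ i, ∑ j, hx i * hy j / 4 * ∑ r, ∑ s, w r * w s *
              (deriv H (ρ t i j r s) * ρ' t i j r s + V i j r s * ρ' t i j r s))
            + ∑ i, ∑ j, hx i * hy j / 4 * ∑ r, ∑ s, w r * w s *
              ((∑ i', ∑ j', hx i' * hy j' / 4 * ∑ r', ∑ s',
                  w r' * w s' * K i j r s i' j' r' s' * ρ t i' j' r' s') * ρ' t i j r s) := by
        ring
      rw [this, ← hSxi, hSplitXY, stepX, stepY, hIsplit]
      ring
    exact hval ▸ hD
  exact ⟨hder, by linarith, hIpos⟩
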